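/- arXiv:2511.18355 — 7 statements merged into one kernel-verified Lean document; each statement's English description precedes it below -/
import Mathlib

section
/- Let (X,p) be a partial metric space in which p(ξ,ξ) = a for all ξ ∈ X, where a is a fixed positive real number, and let I be an admissible ideal on ℕ. Then for any sequence {ξ_n} in X and any r ≥ 0, the diameter of the rough I-statistical limit set I-st-LIM^r ξ_n is at most 2r + 2a; that is, for any α, β ∈ I-st-LIM^r ξ_n one has p(α,β) ≤ 2r + 2a. -/
open Filter Topology

/-- A partial metric on a type `X`. -/
structure PartialMetric (X : Type*) where
  p : X → X → ℝ
  self_nonneg : ∀ x : X, 0 ≤ p x x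
  self_le : ∀ x y : X, p x x ≤ p x y
  eq_iff : ∀ x y : X, x = y ↔ (p x x = p x y ∧ p x y = p y y)
  symm : ∀ x y : X, p x y = p y x
  triangle : ∀ x y z : X, p x y ≤ p x z + p z y - p z z

/-- An admissible nontrivial ideal on ℕ. -/
structure IdealN where
  sets : Set (Set ℕ)
  empty_mem : ∅ ∈ sets
  subset_mem : ∀ A B : Set ℕ, A ∈ sets → B ⊆ A → B ∈ sets
  union_mem : ∀ A B : Set ℕ, A ∈ sets → B ∈ sets → A ∪ B ∈ sets
  admissible : ∀ n : ℕ, ({n} : Set ℕ) ∈ sets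
  nontrivial : (Set.univ : Set ℕ) ∉ sets

open Classical in
/-- `cnt A n` = number of `k` with `1 ≤ k ≤ n` and `k ∈ A`. -/
noncomputable def cnt (A : Set ℕ) (n : ℕ) : ℕ :=
  ((Finset.Icc 1 n).filter (fun k => k ∈ A)).card

/-- `I`-limit of a real sequence. -/
def ILim (I : IdealN) (a : ℕ → ℝ) (L : ℝ) : Prop :=
  ∀ ε > (0 : ℝ), {n : ℕ | ε ≤ |a n - L|} ∈ I.sets

/-- The rough `I`-statistical limit set of degree `r` of a sequence `x`. -/
def RSLim {X : Type*} (I : IdealN) (P : PartialMetric X) (x : ℕ → X) (r : ℝ) : Set X :=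
  {ξ | ∀ ε > (0 : ℝ), ∀ δ > (0 : ℝ),
    {n : ℕ | δ ≤ (cnt {k | r + ε ≤ |P.p (x k) ξ - P.p ξ ξ|} n : ℝ) / n} ∈ I.sets}

theorem stmt_1 {X : Type*} (I : IdealN) (P : PartialMetric X) (x : ℕ → X)
    (a : ℝ) (ha : 0 < a) (hself : ∀ ξ : X, P.p ξ ξ = a)
    (r : ℝ) (hr : 0 ≤ r) (α β : X)
    (hα : α ∈ RSLim I P x r) (hβ : β ∈ RSLim I P x r) :
    P.p α β ≤ 2 * r + 2 * a := by
  classical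
  set ε : ℝ := a / 2 with hε
  have hεpos : (0:ℝ) < ε := by positivity
  have hSα := hα ε hεpos (1/2) (by norm_num)
  have hSβ := hβ ε hεpos (1/2) (by norm_num)
  set Aα : Set ℕ := {k | r + ε ≤ |P.p (x k) α - P.p α α|} with hAα
  set Aβ : Set ℕ := {k | r + ε ≤ |P.p (x k) β - P.p β β|} with hAβ
  have hU : ({n : ℕ | (1:ℝ)/2 ≤ (cnt Aα n : ℝ) / n} ∪
      {n : ℕ | (1:ℝ)/2 ≤ (cnt Aβ n : ℝ) / n} ∪ {0}) ∈ I.sets := by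
    apply I.union_mem
    · exact I.union_mem _ _ hSα hSβ
    · exact I.admissible 0
  have hne : ({n : ℕ | (1:ℝ)/2 ≤ (cnt Aα n : ℝ) / n} ∪
      {n : ℕ | (1:ℝ)/2 ≤ (cnt Aβ n : ℝ) / n} ∪ {0}) ≠ Set.univ := by
    intro h
    exact I.nontrivial (h ▸ hU)
  obtain ⟨n, hn⟩ : ∃ n, n ∉ ({n : ℕ | (1:ℝ)/2 ≤ (cnt Aα n : ℝ) / n} ∪
      {n : ℕ | (1:ℝ)/2 ≤ (cnt Aβ n : ℝ) / n} ∪ {0}) := by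
    by_contra h
    push_neg at h
    exact hne (Set.eq_univ_of_forall h)
  simp only [Set.mem_union, Set.mem_setOf_eq, Set.mem_singleton_iff, not_or] at hn
  obtain ⟨⟨hnα, hnβ⟩, hn0⟩ := hn
  have hnpos : 0 < n := Nat.pos_of_ne_zero hn0
  have hnR : (0:ℝ) < n := by exact_mod_cast hnpos
  have hα' : (cnt Aα n : ℝ) < n / 2 := by
    have := lt_of_not_ge hnα
    rw [div_lt_iff₀ hnR] at this; linarith
  have hβ' : (cnt Aβ n : ℝ) < n / 2 := by
    have := lt_of_not_ge hnβ
    rw [div_lt_iff₀ hnR] at this; linarith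
  have hcard : cnt Aα n + cnt Aβ n < n := by
    have : (cnt Aα n + cnt Aβ n : ℝ) < n := by push_cast; linarith
    exact_mod_cast this
  -- find k ∈ Icc 1 n not in Aα ∪ Aβ
  have hsub : ¬ (∀ k ∈ Finset.Icc 1 n, k ∈ Aα ∨ k ∈ Aβ) := by
    intro h
    have hsubset : Finset.Icc 1 n ⊆
        ((Finset.Icc 1 n).filter (fun k => k ∈ Aα)) ∪
        ((Finset.Icc 1 n).filter (fun k => k ∈ Aβ)) := by
      intro k hk
      rcases h k hk with h' | h'
      · exact Finset.mem_union_left _ (Finset.mem_filter.2 ⟨hk, h'⟩)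
      · exact Finset.mem_union_right _ (Finset.mem_filter.2 ⟨hk, h'⟩)
    have := Finset.card_le_card hsubset
    have h2 := Finset.card_union_le
        ((Finset.Icc 1 n).filter (fun k => k ∈ Aα))
        ((Finset.Icc 1 n).filter (fun k => k ∈ Aβ))
    rw [Nat.card_Icc] at this
    have hcnt : cnt Aα n = ((Finset.Icc 1 n).filter (fun k => k ∈ Aα)).card := by
      simp [cnt]
    have hcnt' : cnt Aβ n = ((Finset.Icc 1 n).filter (fun k => k ∈ Aβ)).card := by
      simp [cnt]
    omega
  push_neg at hsub
  obtain ⟨k, _, hkα, hkβ⟩ := hsub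
  have h1 : |P.p (x k) α - P.p α α| < r + ε := lt_of_not_ge hkα
  have h2 : |P.p (x k) β - P.p β β| < r + ε := lt_of_not_ge hkβ
  have hb1 : P.p (x k) α - P.p α α ≤ |P.p (x k) α - P.p α α| := le_abs_self _
  have hb2 : P.p (x k) β - P.p β β ≤ |P.p (x k) β - P.p β β| := le_abs_self _
  have htri := P.triangle α β (x k)
  have hsymm : P.p α (x k) = P.p (x k) α := P.symm _ _
  have e1 := hself α
  have e2 := hself β
  have e3 := hself (x k)
  rw [hsymm, e3] at htri
  rw [e1] at hb1 h1
  rw [e2] at hb2 h2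
  linarith
end

section
/- Let (X,p) be a partial metric space, I an admissible ideal on ℕ, and suppose {ξ_n} is I-statistically convergent to ξ (rough degree 0). Then every point η of the closed ball of radius r about ξ satisfying p(η,η) = p(ξ,ξ) belongs to the rough I-statistical limit set of degree r, i.e., {η ∈ X : p(ξ,η) ≤ p(ξ,ξ) + r and p(η,η) = p(ξ,ξ)} ⊆ I-st-LIM^r ξ_n. -/
open Filter Topology

theorem stmt_2 {X : Type*} (I : IdealN) (P : PartialMetric X) (x : ℕ → X) (ξ : X)
    (r : ℝ) (hr : 0 ≤ r) (h : ξ ∈ RSLim I P x 0) :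
    {η : X | P.p ξ η ≤ P.p ξ ξ + r ∧ P.p η η = P.p ξ ξ} ⊆ RSLim I P x r := by
  rintro η ⟨hball, hself⟩ ε hε δ hδ
  have hI := h ε hε δ hδ
  apply I.subset_mem _ _ hI
  intro n hn
  have hsub : {k | r + ε ≤ |P.p (x k) η - P.p η η|} ⊆
      {k | 0 + ε ≤ |P.p (x k) ξ - P.p ξ ξ|} := by
    intro k hk
    simp only [Set.mem_setOf_eq] at hk ⊢
    by_contra hc
    push_neg at hc
    apply absurd hk
    push_neg
    have hnn : 0 ≤ P.p (x k) η - P.p η η := by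
      have := P.self_le η (x k)
      rw [P.symm η (x k)] at this; linarith
    rw [abs_of_nonneg hnn]
    have htri := P.triangle (x k) η ξ
    have habs : P.p (x k) ξ - P.p ξ ξ ≤ |P.p (x k) ξ - P.p ξ ξ| := le_abs_self _
    linarith
  have hcnt : (cnt {k | r + ε ≤ |P.p (x k) η - P.p η η|} n : ℝ) ≤
      (cnt {k | 0 + ε ≤ |P.p (x k) ξ - P.p ξ ξ|} n : ℝ) := by
    have : cnt {k | r + ε ≤ |P.p (x k) η - P.p η η|} n ≤
        cnt {k | 0 + ε ≤ |P.p (x k) ξ - P.p ξ ξ|} n := by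
      classical
      exact Finset.card_le_card (Finset.monotone_filter_right _ (fun a _ ha => hsub ha))
    exact_mod_cast this
  simp only [Set.mem_setOf_eq] at hn ⊢
  refine hn.trans ?_
  rcases Nat.eq_zero_or_pos n with rfl | hpos
  · simp
  · exact div_le_div_of_nonneg_right hcnt (by exact_mod_cast hpos.le)
end

section
/- Let (X,p) be a partial metric space and I an admissible ideal on ℕ. For any sequence {ξ_n} in X and any r ≥ 0, the rough I-statistical limit set I-st-LIM^r ξ_n is closed in the following sense: if {η_m} is a sequence in I-st-LIM^r ξ_n and η ∈ X with |p(η_m,η) − p(η,η)| → 0 as m → ∞, then η ∈ I-st-LIM^r ξ_n. -/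
open Filter Topology

theorem stmt_3 {X : Type*} (I : IdealN) (P : PartialMetric X) (x : ℕ → X)
    (r : ℝ) (hr : 0 ≤ r) (η : ℕ → X) (η₀ : X)
    (hmem : ∀ m : ℕ, η m ∈ RSLim I P x r)
    (hconv : Filter.Tendsto (fun m => |P.p (η m) η₀ - P.p η₀ η₀|) atTop (nhds 0)) :
    η₀ ∈ RSLim I P x r := by
  intro ε hε δ hδ
  have h2 : (0:ℝ) < ε/2 := by positivity
  obtain ⟨m, hm⟩ := (hconv.eventually (gt_mem_nhds h2)).exists
  have key : {k | r + ε ≤ |P.p (x k) η₀ - P.p η₀ η₀|} ⊆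
      {k | r + ε/2 ≤ |P.p (x k) (η m) - P.p (η m) (η m)|} := by
    intro k hk
    simp only [Set.mem_setOf_eq] at hk ⊢
    have h1 : P.p η₀ η₀ ≤ P.p (x k) η₀ := by rw [P.symm (x k) η₀]; exact P.self_le _ _
    have h1' : P.p (η m) (η m) ≤ P.p (x k) (η m) := by rw [P.symm (x k) (η m)]; exact P.self_le _ _
    rw [abs_of_nonneg (by linarith)] at hk
    rw [abs_of_nonneg (by linarith)]
    have htri := P.triangle (x k) η₀ (η m)
    have habs : P.p (η m) η₀ - P.p η₀ η₀ ≤ |P.p (η m) η₀ - P.p η₀ η₀| := le_abs_self _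
    linarith
  have hcnt : ∀ n, (cnt {k | r + ε ≤ |P.p (x k) η₀ - P.p η₀ η₀|} n : ℝ) ≤
      (cnt {k | r + ε/2 ≤ |P.p (x k) (η m) - P.p (η m) (η m)|} n : ℝ) := by
    intro n
    exact_mod_cast Finset.card_le_card (Finset.monotone_filter_right _ (fun k _ hk => key hk))
  refine I.subset_mem _ _ (hmem m (ε/2) h2 δ hδ) ?_
  intro n hn
  simp only [Set.mem_setOf_eq] at hn ⊢
  calc δ ≤ _ := hn
    _ ≤ _ := by
        rcases Nat.eq_zero_or_pos n with h | h
        · simp [h]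
        · exact div_le_div_of_nonneg_right (hcnt n) (by positivity : (0:ℝ) ≤ n) |>.trans_eq rfl
end

section
/- Let (X,p) be a partial metric space with p(ξ,ξ) = a for all ξ ∈ X (a > 0 a fixed constant), and let I be an admissible nontrivial ideal on ℕ. A sequence {ξ_n} in X is I-statistically bounded if and only if there exists a real number r > 0 such that the rough I-statistical limit set I-st-LIM^r ξ_n is nonempty. -/
open Filter Topology

lemma cnt_mono {A B : Set ℕ} (h : A ⊆ B) (n : ℕ) : cnt A n ≤ cnt B n := by
  classical
  unfold cnt
  apply Finset.card_le_card
  intro k hk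
  simp only [Finset.mem_filter] at hk ⊢
  exact ⟨hk.1, h hk.2⟩

lemma key (I : IdealN) {A B : Set ℕ} (h : A ⊆ B) (δ : ℝ)
    (hB : {n : ℕ | δ ≤ (cnt B n : ℝ) / n} ∈ I.sets) :
    {n : ℕ | δ ≤ (cnt A n : ℝ) / n} ∈ I.sets := by
  apply I.subset_mem _ _ hB
  intro n hn
  simp only [Set.mem_setOf_eq] at hn ⊢
  refine le_trans hn ?_
  rcases Nat.eq_zero_or_pos n with h0 | h0
  · simp [h0]
  · apply div_le_div_of_nonneg_right _ (Nat.cast_nonneg n)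
    exact_mod_cast cnt_mono h n

theorem stmt_4 {X : Type*} (I : IdealN) (P : PartialMetric X) (x : ℕ → X)
    (a : ℝ) (ha : 0 < a) (hself : ∀ ξ : X, P.p ξ ξ = a) :
    (∀ u : X, ∃ M > (0 : ℝ), ∀ δ > (0 : ℝ),
      {n : ℕ | δ ≤ (cnt {k | M ≤ P.p (x k) u} n : ℝ) / n} ∈ I.sets)
    ↔ ∃ r > (0 : ℝ), (RSLim I P x r).Nonempty := by
  constructor
  · intro hb
    obtain ⟨M, hM, hMδ⟩ := hb (x 0)
    refine ⟨M, hM, x 0, ?_⟩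
    intro ε hε δ hδ
    apply key I _ δ (hMδ δ hδ)
    intro k hk
    have h1 : P.p (x k) (x 0) - a ≥ 0 := by
      have := P.self_le (x 0) (x k)
      rw [hself, P.symm] at this; linarith
    have hk' : M + ε ≤ |P.p (x k) (x 0) - P.p (x 0) (x 0)| := hk
    rw [hself, abs_of_nonneg h1] at hk'
    show M ≤ P.p (x k) (x 0)
    linarith
  · rintro ⟨r, hr, ξ, hξ⟩
    intro u
    refine ⟨r + 1 + P.p ξ u, by nlinarith [P.self_le ξ u, hself ξ], fun δ hδ => ?_⟩
    apply key I _ δ (hξ 1 one_pos δ hδ)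
    intro k hk
    show r + 1 ≤ |P.p (x k) ξ - P.p ξ ξ|
    have htri := P.triangle (x k) u ξ
    have h1 : P.p (x k) ξ - a ≥ 0 := by
      have := P.self_le (x k) ξ; rw [hself] at this; linarith
    rw [hself, abs_of_nonneg h1]
    have hk' : r + 1 + P.p ξ u ≤ P.p (x k) u := hk
    rw [hself] at htri
    have hsym : P.p ξ (x k) = P.p (x k) ξ := P.symm ξ (x k)
    linarith
end

section
/- Let (X,p) be a partial metric space, I an admissible ideal on ℕ, and r > 0. Suppose {ξ_{i_k}} is a subsequence of {ξ_n} (with i_1 < i_2 < …) such that the I-natural density of the index set {i_k : k ∈ ℕ} equals 1, i.e., I-lim_n (1/n)|{k ∈ ℕ : i_k ≤ n}| = 1. Then I-st-LIM^r ξ_n ⊆ I-st-LIM^r ξ_{i_k}. -/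
open Filter Topology

lemma key_count (i : ℕ → ℕ) (hi : StrictMono i) (B : Set ℕ) (n : ℕ) :
    cnt (i ⁻¹' B) n + cnt (Set.range i) n ≤ cnt B n + n + 1 := by
  classical
  unfold cnt
  set T := Finset.Icc 1 n with hT
  have hsplit := Finset.card_filter_add_card_filter_not
    (s := T.filter (fun k => k ∈ i ⁻¹' B)) (p := fun k => i k ≤ n)
  rw [Finset.filter_filter, Finset.filter_filter] at hsplit
  have h1 : (T.filter (fun k => k ∈ i ⁻¹' B ∧ i k ≤ n)).card ≤
      (T.filter (fun k => k ∈ B)).card := by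
    apply Finset.card_le_card_of_injOn i
    · intro k hk
      simp only [Finset.mem_coe, Finset.mem_filter, Finset.mem_Icc, hT, Set.mem_preimage] at hk ⊢
      exact ⟨⟨le_trans hk.1.1 hi.le_apply, hk.2.2⟩, hk.2.1⟩
    · exact fun a _ b _ h => hi.injective h
  have h2 : (T.filter (fun k => k ∈ i ⁻¹' B ∧ ¬ i k ≤ n)).card ≤
      (T.filter (fun k => ¬ i k ≤ n)).card := by
    apply Finset.card_le_card
    intro a ha
    simp only [Finset.mem_filter] at ha ⊢
    exact ⟨ha.1, ha.2.2⟩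
  have h3 := Finset.card_filter_add_card_filter_not
    (s := T) (p := fun k => i k ≤ n)
  have hTcard : T.card = n := by simp [hT]
  have h4 : (T.filter (fun k => k ∈ Set.range i)).card ≤
      (T.filter (fun k => i k ≤ n)).card + 1 := by
    have hsub : T.filter (fun k => k ∈ Set.range i) ⊆
        Finset.image i (insert 0 (T.filter (fun k => i k ≤ n))) := by
      intro m hm
      simp only [Finset.mem_filter, Finset.mem_Icc, hT, Set.mem_range] at hm
      obtain ⟨⟨h1m, h2m⟩, k, hk⟩ := hm
      rw [Finset.mem_image]
      refine ⟨k, ?_, hk⟩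
      rcases Nat.eq_zero_or_pos k with h0 | hpos
      · simp [h0]
      · simp only [Finset.mem_insert, Finset.mem_filter, Finset.mem_Icc, hT]
        right
        have hkm : k ≤ m := hk ▸ hi.le_apply
        exact ⟨⟨hpos, hkm.trans h2m⟩, hk ▸ h2m⟩
    calc (T.filter (fun k => k ∈ Set.range i)).card
        ≤ (Finset.image i (insert 0 (T.filter (fun k => i k ≤ n)))).card :=
          Finset.card_le_card hsub
      _ ≤ (insert 0 (T.filter (fun k => i k ≤ n))).card := Finset.card_image_le
      _ ≤ (T.filter (fun k => i k ≤ n)).card + 1 :=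
          Finset.card_insert_le 0 (T.filter (fun k => i k ≤ n))
  omega

lemma finite_mem_ideal (I : IdealN) {A : Set ℕ} (h : A.Finite) : A ∈ I.sets := by
  refine Set.Finite.induction_on A h I.empty_mem ?_
  intro a s _ _ ih
  rw [Set.insert_eq]
  exact I.union_mem _ _ (I.admissible a) ih

theorem stmt_6 {X : Type*} (I : IdealN) (P : PartialMetric X) (x : ℕ → X)
    (r : ℝ) (hr : 0 < r) (i : ℕ → ℕ) (hi : StrictMono i)
    (hdens : ILim I (fun n => (cnt (Set.range i) n : ℝ) / n) 1) :
    RSLim I P x r ⊆ RSLim I P (fun k => x (i k)) r := by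
  intro ξ hξ ε hε δ hδ
  set B : Set ℕ := {k | r + ε ≤ |P.p (x k) ξ - P.p ξ ξ|} with hB
  have hδ3 : (0:ℝ) < δ / 3 := by positivity
  have A1 := hξ ε hε (δ/3) hδ3
  have A2 := hdens (δ/3) hδ3
  have A3 : {n : ℕ | n ≤ ⌈3/δ⌉₊} ∈ I.sets :=
    finite_mem_ideal I (Set.finite_Iic _)
  have hmem := I.union_mem _ _ (I.union_mem _ _ A1 A2) A3
  apply I.subset_mem _ _ hmem
  intro n hn
  simp only [Set.mem_setOf_eq] at hn
  by_contra hcon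
  simp only [Set.mem_union, Set.mem_setOf_eq, not_or, not_le] at hcon
  obtain ⟨⟨c1, c2⟩, c3⟩ := hcon
  have c1' : (cnt B n : ℝ) / n < δ / 3 := c1
  have c2' : |(cnt (Set.range i) n : ℝ) / n - 1| < δ / 3 := c2
  have hn0 : 0 < n := lt_of_le_of_lt (Nat.zero_le _) c3
  have hnR : (0:ℝ) < n := Nat.cast_pos.mpr hn0
  have h1 : (3:ℝ)/δ < n := by
    have := Nat.le_ceil (3/δ)
    have hc : (⌈3/δ⌉₊ : ℝ) < n := by exact_mod_cast c3
    linarith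
  have h3n : (3:ℝ) < δ * n := by
    rw [div_lt_iff₀ hδ] at h1
    linarith
  have hinv : (1:ℝ) / n < δ / 3 := by
    rw [div_lt_div_iff₀ hnR (by norm_num : (0:ℝ) < 3)]
    linarith
  have hkey := key_count i hi B n
  have hkeyR : (cnt (i ⁻¹' B) n : ℝ) ≤ (cnt B n : ℝ) + n + 1 - (cnt (Set.range i) n : ℝ) := by
    have : ((cnt (i ⁻¹' B) n : ℕ) : ℝ) + (cnt (Set.range i) n : ℝ) ≤ (cnt B n : ℝ) + n + 1 := by
      exact_mod_cast hkey
    linarith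
  have hn' : δ ≤ (cnt (i ⁻¹' B) n : ℝ) / n := hn
  have heq : (cnt B n:ℝ)/n + (1 - (cnt (Set.range i) n:ℝ)/n) + 1/n
      = ((cnt B n:ℝ) + n + 1 - (cnt (Set.range i) n:ℝ))/n := by
    field_simp
    ring
  have hdiv : (cnt (i ⁻¹' B) n : ℝ) / n ≤
      (cnt B n : ℝ) / n + (1 - (cnt (Set.range i) n : ℝ) / n) + 1 / n := by
    rw [heq]
    gcongr
  have habs : 1 - (cnt (Set.range i) n : ℝ) / n < δ / 3 := by
    have := abs_lt.mp c2'
    linarith [this.1]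
  linarith
end

section
/- Let (X,p) be a partial metric space, I an admissible ideal on ℕ, and let {a_n}, {b_n} be sequences in X with p(a_n,b_n) → 0 as n → ∞. If {a_n} is rough I-statistically convergent to a point a of roughness degree r, and p(a_n,a_n) → 0 as n → ∞, then {b_n} is rough I-statistically convergent to a of roughness degree r. -/
open Filter Topology

lemma finset_mem_ideal (I : IdealN) (s : Finset ℕ) : (↑s : Set ℕ) ∈ I.sets := by
  classical
  induction s using Finset.induction_on with
  | empty => simpa using I.empty_mem
  | @insert x s hx ih =>
      rw [Finset.coe_insert, Set.insert_eq]
      exact I.union_mem _ _ (I.admissible x) ih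

lemma cnt_union_le (A B : Set ℕ) (n : ℕ) : cnt (A ∪ B) n ≤ cnt A n + cnt B n := by
  unfold cnt
  refine le_trans (Finset.card_le_card
    (t := (@Finset.filter ℕ (fun k => k ∈ A) (fun a => Classical.propDecidable _)
            (Finset.Icc 1 n)) ∪
          (@Finset.filter ℕ (fun k => k ∈ B) (fun a => Classical.propDecidable _)
            (Finset.Icc 1 n))) ?_) (Finset.card_union_le _ _)
  intro k hk
  simp only [Finset.mem_filter] at hk
  simp only [Finset.mem_union, Finset.mem_filter]
  rcases hk.2 with h | h
  · exact Or.inl ⟨hk.1, h⟩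
  · exact Or.inr ⟨hk.1, h⟩

lemma cnt_lt_le (N n : ℕ) : cnt {k | k < N} n ≤ N := by
  unfold cnt
  refine le_trans (Finset.card_le_card (t := Finset.range N) ?_)
    (le_of_eq (Finset.card_range N))
  intro k hk
  simp only [Finset.mem_filter] at hk
  exact Finset.mem_range.mpr hk.2

theorem stmt_7 {X : Type*} (I : IdealN) (P : PartialMetric X) (a b : ℕ → X)
    (r : ℝ) (hr : 0 ≤ r) (a₀ : X)
    (hab : Filter.Tendsto (fun n => P.p (a n) (b n)) atTop (nhds 0))
    (ha : a₀ ∈ RSLim I P a r)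
    (haa : Filter.Tendsto (fun n => P.p (a n) (a n)) atTop (nhds 0)) :
    a₀ ∈ RSLim I P b r := by
  intro ε hε δ hδ
  -- get N such that p(a k, b k) < ε/2 for k ≥ N
  have h2 : ∀ᶠ k in atTop, |P.p (a k) (b k)| < ε / 2 := by
    have := Metric.tendsto_atTop.mp hab (ε / 2) (by linarith)
    obtain ⟨N, hN⟩ := this
    exact eventually_atTop.mpr ⟨N, fun k hk => by simpa [Real.dist_eq] using hN k hk⟩
  obtain ⟨N, hN⟩ := eventually_atTop.mp h2
  set A : Set ℕ := {k | r + ε / 2 ≤ |P.p (a k) a₀ - P.p a₀ a₀|} with hA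
  set B : Set ℕ := {k | r + ε ≤ |P.p (b k) a₀ - P.p a₀ a₀|} with hB
  -- pointwise estimate: |p(b k, a₀) - p(a k, a₀)| ≤ p(a k, b k)
  have key : ∀ k, |P.p (b k) a₀ - P.p (a k) a₀| ≤ P.p (a k) (b k) := by
    intro k
    have t1 := P.triangle (b k) a₀ (a k)
    have t2 := P.triangle (a k) a₀ (b k)
    have s1 := P.self_nonneg (a k)
    have s3 := P.self_nonneg (b k)
    have s2 := P.self_le (b k) (a k)
    have hsym1 : P.p (b k) (a k) = P.p (a k) (b k) := P.symm _ _
    have hsym2 : P.p (b k) (b k) ≤ P.p (a k) (b k) := by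
      have := P.self_le (b k) (a k); rwa [hsym1] at this
    rw [abs_le]
    constructor <;> nlinarith [abs_nonneg (P.p (a k) (b k))]
  -- B ⊆ A ∪ {k < N}
  have hBsub : B ⊆ A ∪ {k | k < N} := by
    intro k hk
    by_cases hkN : k < N
    · exact Or.inr hkN
    · left
      have hk' : |P.p (a k) (b k)| < ε / 2 := hN k (le_of_not_gt hkN)
      have h1 : r + ε ≤ |P.p (b k) a₀ - P.p a₀ a₀| := hk
      have h3 : |P.p (b k) a₀ - P.p a₀ a₀| ≤ |P.p (a k) a₀ - P.p a₀ a₀|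
          + |P.p (b k) a₀ - P.p (a k) a₀| := by
        have := abs_sub_abs_le_abs_sub (P.p (b k) a₀ - P.p a₀ a₀) (P.p (a k) a₀ - P.p a₀ a₀)
        have habs := abs_add_le (P.p (a k) a₀ - P.p a₀ a₀) (P.p (b k) a₀ - P.p (a k) a₀)
        calc |P.p (b k) a₀ - P.p a₀ a₀|
            = |(P.p (a k) a₀ - P.p a₀ a₀) + (P.p (b k) a₀ - P.p (a k) a₀)| := by ring_nf
          _ ≤ _ := habs
      have h4 : P.p (a k) (b k) ≤ |P.p (a k) (b k)| := le_abs_self _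
      show r + ε / 2 ≤ |P.p (a k) a₀ - P.p a₀ a₀|
      have := key k
      linarith
  -- choose M so that N/n ≤ δ/2 for n ≥ M
  obtain ⟨M, hM⟩ : ∃ M : ℕ, (N : ℝ) ≤ δ / 2 * M := by
    obtain ⟨M, hM⟩ := exists_nat_ge ((N : ℝ) / (δ / 2))
    exact ⟨M, by rw [div_le_iff₀ (by linarith)] at hM; linarith⟩
  have hsub : {n : ℕ | δ ≤ (cnt B n : ℝ) / n}
      ⊆ {n : ℕ | δ / 2 ≤ (cnt A n : ℝ) / n} ∪ {n | n < M + 1} := by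
    intro n hn
    by_cases hnM : n < M + 1
    · exact Or.inr hnM
    · left
      have hnpos : 0 < n := lt_of_lt_of_le (Nat.succ_pos M) (le_of_not_gt hnM)
      have hnR : (0 : ℝ) < n := by exact_mod_cast hnpos
      have hδn : δ ≤ (cnt B n : ℝ) / n := hn
      have hcnt : (cnt B n : ℝ) ≤ cnt A n + N := by
        have hc1 : cnt B n ≤ cnt A n + N :=
          le_trans (cnt_mono hBsub n) (le_trans (cnt_union_le _ _ n)
            (Nat.add_le_add_left (cnt_lt_le N n) _))
        exact_mod_cast hc1
      have hMn : (M : ℝ) ≤ n := by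
        have : M + 1 ≤ n := le_of_not_gt hnM
        exact_mod_cast le_trans (Nat.le_succ M) this
      have hNn : (N : ℝ) ≤ δ / 2 * n := le_trans hM (by nlinarith)
      show δ / 2 ≤ (cnt A n : ℝ) / n
      rw [le_div_iff₀ hnR] at hδn ⊢
      nlinarith
  exact I.subset_mem _ _
    (I.union_mem _ _ (ha (ε / 2) (by linarith) (δ / 2) (by linarith))
      (finite_mem_ideal I (Set.finite_Iio (M + 1))))
    hsub
end

section
/- Let (X,p) be a partial metric space with p(ξ,ξ) = a for all ξ ∈ X (a a real constant), I an admissible ideal on ℕ, and r > 0. If c ∈ X is an I-statistical cluster point of the sequence {ξ_n}, then the rough I-statistical limit set of degree r is contained in the closed ball of radius r about c: I-st-LIM^r ξ_n ⊆ {ξ ∈ X : p(ξ,c) ≤ p(c,c) + r}. -/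
open Filter Topology

theorem stmt_9 {X : Type*} (I : IdealN) (P : PartialMetric X) (x : ℕ → X)
    (a : ℝ) (hself : ∀ ξ : X, P.p ξ ξ = a)
    (r : ℝ) (hr : 0 < r) (c : X)
    (hc : ∀ ε > (0 : ℝ), ∃ L : ℝ, L ≠ 0 ∧
      ILim I (fun n => (cnt {k | |P.p (x k) c - P.p c c| < ε} n : ℝ) / n) L) :
    RSLim I P x r ⊆ {ξ : X | P.p ξ c ≤ P.p c c + r} := by
  intro ξ hξ
  by_contra hcon
  simp only [Set.mem_setOf_eq, not_le] at hcon
  set ε : ℝ := (P.p ξ c - P.p c c - r) / 2 with hε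
  have hεpos : 0 < ε := by simp only [hε]; linarith
  -- subset of index sets
  have hsub : {k | |P.p (x k) c - P.p c c| < ε} ⊆
      {k | r + ε ≤ |P.p (x k) ξ - P.p ξ ξ|} := by
    intro k hk
    simp only [Set.mem_setOf_eq] at hk ⊢
    have h1 : P.p (x k) c - P.p c c < ε := lt_of_le_of_lt (le_abs_self _) hk
    have htri := P.triangle ξ c (x k)
    have hsymm := P.symm ξ (x k)
    have hsxk := hself (x k)
    have hsc := hself c
    have hsξ := hself ξ
    have key : r + ε ≤ P.p (x k) ξ - P.p ξ ξ := by
      have : ε = (P.p ξ c - P.p c c - r) / 2 := hε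
      linarith
    exact le_trans key (le_abs_self _)
  obtain ⟨L, hL, hlim⟩ := hc ε hεpos
  -- L must be positive, since the sequence is nonnegative
  have hnn : ∀ n : ℕ, (0 : ℝ) ≤ (cnt {k | |P.p (x k) c - P.p c c| < ε} n : ℝ) / n := by
    intro n; positivity
  have hLpos : 0 < L := by
    rcases lt_trichotomy L 0 with h | h | h
    · exfalso
      have := hlim (-L) (by linarith)
      apply I.nontrivial
      apply I.subset_mem _ _ this
      intro n _
      simp only [Set.mem_setOf_eq]
      have := hnn n
      rw [abs_of_nonneg (by linarith)]
      linarith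
    · exact absurd h hL
    · exact h
  -- from hlim: set where value is far from L is in I
  have hT := hlim (L / 2) (by linarith)
  have hS := hξ ε hεpos (L / 2) (by linarith)
  apply I.nontrivial
  apply I.subset_mem _ _ (I.union_mem _ _ hT hS)
  intro n _
  by_cases hn : L / 2 ≤ |(cnt {k | |P.p (x k) c - P.p c c| < ε} n : ℝ) / n - L|
  · exact Or.inl hn
  · right
    push_neg at hn
    rw [abs_lt] at hn
    have h1 : L / 2 ≤ (cnt {k | |P.p (x k) c - P.p c c| < ε} n : ℝ) / n := by linarith [hn.1]
    simp only [Set.mem_setOf_eq]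
    refine le_trans h1 ?_
    have hm := cnt_mono hsub n
    gcongr
end
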